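/- Let F₁,F₂,F₃,F₄ be bounded, positive, measurable functions on ℝ² with finite measure support, let F denote their entangled product, and for (p,q) ∈ ℝ², t > 0 set A^{(p,q,t)}(F₁,F₂,F₃,F₄) := F * [ϑ⊗ϑ⊗ϑ⊗ϑ]_t(p,q,p,q). Then A^{(p,q,t)}(F₁,F₂,F₃,F₄) ≤ A^{(p,q,t)}(F₁,F₂,F₂,F₁)^{1/2} · A^{(p,q,t)}(F₄,F₃,F₃,F₄)^{1/2}, and moreover for a single function F, A^{(p,q,t)}(F,F,F,F) ≤ (F² * [ϑ⊗ϑ]_t(p,q))². -/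

import Mathlib

open MeasureTheory Set

noncomputable section

/-- The dyadic square with scale parameter `a.1` and position `(a.2.1, a.2.2)`. -/
def dSq (a : ℤ × ℤ × ℤ) : Set (ℝ × ℝ) :=
  Icc ((2:ℝ)^a.1 * (a.2.1 : ℝ)) ((2:ℝ)^a.1 * ((a.2.1 : ℝ) + 1)) ×ˢ
    Icc ((2:ℝ)^a.1 * (a.2.2 : ℝ)) ((2:ℝ)^a.1 * ((a.2.2 : ℝ) + 1))

/-- A convex tree of dyadic squares. -/
structure ConvexTree where
  squares : Finset (ℤ × ℤ × ℤ)
  root : ℤ × ℤ × ℤ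
  root_mem : root ∈ squares
  subset_root : ∀ a ∈ squares, dSq a ⊆ dSq root
  convex : ∀ a b c : ℤ × ℤ × ℤ, a ∈ squares → c ∈ squares →
    dSq a ⊆ dSq b → dSq b ⊆ dSq c → b ∈ squares

/-- `𝒯_k`: parameters of squares of the tree of sidelength `2^k`. -/
def treeLevel (T : ConvexTree) (k : ℤ) : Set (ℤ × ℤ × ℤ) :=
  {a | a ∈ T.squares ∧ a.1 = k}

/-- `T_k`: union of the squares of sidelength `2^k` in the tree. -/
def Tk (T : ConvexTree) (k : ℤ) : Set (ℝ × ℝ) :=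
  ⋃ a ∈ treeLevel T k, dSq a

/-- The Whitney region `Ω_𝒞` in the upper half space. -/
def Omega (C : Set (ℤ × ℤ × ℤ)) : Set ((ℝ × ℝ) × ℝ) :=
  ⋃ a ∈ C, dSq a ×ˢ Icc ((2:ℝ)^a.1 / 2) ((2:ℝ)^a.1)

/-- Euclidean norm on `ℝ²`. -/
def en (z : ℝ × ℝ) : ℝ := Real.sqrt (z.1^2 + z.2^2)

/-- `θ(x,y) = (1+|(x,y)|⁴)⁻¹`. -/
def theta (z : ℝ × ℝ) : ℝ := (1 + en z ^ 4)⁻¹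

/-- `ϑ(x) = (1+|x|)⁻⁴`. -/
def vth (x : ℝ) : ℝ := ((1 + |x|)^4)⁻¹

/-- `F² * [θ]_t (p,q)`. -/
def convTheta (F : ℝ × ℝ → ℝ) (p q t : ℝ) : ℝ :=
  ∫ z : ℝ × ℝ, (F z)^2 * ((t^2)⁻¹ * theta ((p - z.1)/t, (q - z.2)/t))

/-- `M(F, 𝒞)`. -/
def Msize (F : ℝ × ℝ → ℝ) (C : Set (ℤ × ℤ × ℤ)) : ℝ :=
  ⨆ w : Omega C, Real.sqrt (convTheta F w.1.1.1 w.1.1.2 w.1.2)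

/-- `F * [φ₁⊗φ₂⊗φ₃⊗φ₄]_t (p,q,p,q)` where `F` is the entangled product of `F₁,F₂,F₃,F₄`. -/
def entConv (F1 F2 F3 F4 : ℝ × ℝ → ℝ) (φ1 φ2 φ3 φ4 : ℝ → ℝ) (t p q : ℝ) : ℝ :=
  ∫ x : ℝ, ∫ y : ℝ, ∫ x' : ℝ, ∫ y' : ℝ,
    F1 (x, y) * F2 (x', y) * F3 (x', y') * F4 (x, y') *
      (t⁻¹ * φ1 ((p - x)/t)) * (t⁻¹ * φ2 ((q - y)/t)) *
      (t⁻¹ * φ3 ((p - x')/t)) * (t⁻¹ * φ4 ((q - y')/t))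

/-- The local form `Θ^𝒞_{φ₁,φ₂,φ₃,φ₄}`. -/
def Theta (C : Set (ℤ × ℤ × ℤ)) (φ1 φ2 φ3 φ4 : ℝ → ℝ)
    (F1 F2 F3 F4 : ℝ × ℝ → ℝ) : ℝ :=
  ∫ w in Omega C, entConv F1 F2 F3 F4 φ1 φ2 φ3 φ4 w.2 w.1.1 w.1.2 / w.2

/-- Bounded, positive, measurable with finite measure support. -/
def Nice (F : ℝ × ℝ → ℝ) : Prop :=
  Measurable F ∧ (∃ C : ℝ, ∀ z, |F z| ≤ C) ∧
    volume (Function.support F) < ⊤ ∧ ∀ z, 0 ≤ F z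

namespace BoxCS
open ENNReal

/-- `L(x,x') = ∫ f(x,y) g(x',y) gV(y) dy`. -/
def Lfun (f g : ℝ × ℝ → ℝ≥0∞) (gV : ℝ → ℝ≥0∞) (x x' : ℝ) : ℝ≥0∞ :=
  ∫⁻ y, f (x, y) * g (x', y) * gV y

def E1 (f1 f2 f3 f4 : ℝ × ℝ → ℝ≥0∞) (gW gV : ℝ → ℝ≥0∞) (x y x' : ℝ) : ℝ≥0∞ :=
  ∫⁻ y', f1 (x, y) * f2 (x', y) * f3 (x', y') * f4 (x, y') * gW x * gV y * gW x' * gV y'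

def E2 (f1 f2 f3 f4 : ℝ × ℝ → ℝ≥0∞) (gW gV : ℝ → ℝ≥0∞) (x y : ℝ) : ℝ≥0∞ :=
  ∫⁻ x', E1 f1 f2 f3 f4 gW gV x y x'

def E3 (f1 f2 f3 f4 : ℝ × ℝ → ℝ≥0∞) (gW gV : ℝ → ℝ≥0∞) (x : ℝ) : ℝ≥0∞ :=
  ∫⁻ y, E2 f1 f2 f3 f4 gW gV x y

def E4 (f1 f2 f3 f4 : ℝ × ℝ → ℝ≥0∞) (gW gV : ℝ → ℝ≥0∞) : ℝ≥0∞ :=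
  ∫⁻ x, E3 f1 f2 f3 f4 gW gV x

variable {f1 f2 f3 f4 f g : ℝ × ℝ → ℝ≥0∞} {gW gV : ℝ → ℝ≥0∞}

lemma measurable_Lfun (hf : Measurable f) (hg : Measurable g) (hgV : Measurable gV) :
    Measurable fun w : ℝ × ℝ => Lfun f g gV w.1 w.2 := by
  have : Measurable fun u : (ℝ × ℝ) × ℝ =>
      f (u.1.1, u.2) * g (u.1.2, u.2) * gV u.2 := by fun_prop
  exact this.lintegral_prod_right'

lemma measurable_Lfun_right (hf : Measurable f) (hg : Measurable g) (hgV : Measurable gV)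
    (x : ℝ) : Measurable fun x' : ℝ => Lfun f g gV x x' :=
  (measurable_Lfun hf hg hgV).comp (measurable_const.prodMk measurable_id)


lemma lint_le_const_mul {h g : ℝ → ℝ≥0∞} (hg : Measurable g) {K : ℝ≥0∞}
    (hb : ∀ s, h s ≤ K * g s) : ∫⁻ s, h s ≤ K * ∫⁻ s, g s :=
  (lintegral_mono hb).trans_eq (lintegral_const_mul K hg)

/-- basic ENNReal Cauchy-Schwarz for lintegrals -/
lemma CSbasic {α : Type*} [MeasurableSpace α] (μ : Measure α) {u v : α → ℝ≥0∞}
    (hu : AEMeasurable u μ) (hv : AEMeasurable v μ) :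
    ∫⁻ a, u a * v a ∂μ ≤
      (∫⁻ a, u a * u a ∂μ) ^ (1/2 : ℝ) * (∫⁻ a, v a * v a ∂μ) ^ (1/2 : ℝ) := by
  have h2 : (2:ℝ).HolderConjugate 2 := Real.HolderConjugate.two_two
  have h := ENNReal.lintegral_mul_le_Lp_mul_Lq μ h2 hu hv
  have hsq : ∀ a : ℝ≥0∞, a ^ (2:ℝ) = a * a := fun a => by
    rw [show (2:ℝ) = ((2:ℕ):ℝ) by norm_num, ENNReal.rpow_natCast, pow_two]
  simpa [Pi.mul_apply, hsq] using h

lemma half_half (a : ℝ≥0∞) : a ^ (1/2 : ℝ) * a ^ (1/2 : ℝ) = a := by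
  rw [← ENNReal.rpow_add_of_nonneg _ _ (by norm_num) (by norm_num)]
  norm_num

/-- ENNReal Cauchy-Schwarz with weight -/
lemma CSweight {α : Type*} [MeasurableSpace α] (μ : Measure α) {L M G : α → ℝ≥0∞}
    (hL : AEMeasurable L μ) (hM : AEMeasurable M μ) (hG : AEMeasurable G μ) :
    ∫⁻ z, L z * M z * G z ∂μ ≤
      (∫⁻ z, L z * L z * G z ∂μ) ^ (1/2 : ℝ) * (∫⁻ z, M z * M z * G z ∂μ) ^ (1/2 : ℝ) := by
  have e0 : ∀ z, L z * M z * G z =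
      (L z * (G z) ^ (1/2:ℝ)) * (M z * (G z) ^ (1/2:ℝ)) := fun z => by
    rw [mul_mul_mul_comm, half_half]
  have e1 : ∀ z, L z * L z * G z =
      (L z * (G z) ^ (1/2:ℝ)) * (L z * (G z) ^ (1/2:ℝ)) := fun z => by
    rw [mul_mul_mul_comm, half_half]
  have e2 : ∀ z, M z * M z * G z =
      (M z * (G z) ^ (1/2:ℝ)) * (M z * (G z) ^ (1/2:ℝ)) := fun z => by
    rw [mul_mul_mul_comm, half_half]
  simp only [e0, e1, e2]
  exact CSbasic μ (hL.mul (hG.pow_const _)) (hM.mul (hG.pow_const _))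


lemma measE1 (hf1 : Measurable f1) (hf2 : Measurable f2) (hf3 : Measurable f3)
    (hf4 : Measurable f4) (hgW : Measurable gW) (hgV : Measurable gV) (x y : ℝ) :
    Measurable fun x' => E1 f1 f2 f3 f4 gW gV x y x' := by
  have h0 : Measurable fun u : ℝ × ℝ =>
      f1 (x, y) * f2 (u.1, y) * f3 (u.1, u.2) * f4 (x, u.2) * gW x * gV y * gW u.1 * gV u.2 := by
    fun_prop
  exact h0.lintegral_prod_right'

lemma measE2 (hf1 : Measurable f1) (hf2 : Measurable f2) (hf3 : Measurable f3)
    (hf4 : Measurable f4) (hgW : Measurable gW) (hgV : Measurable gV) (x : ℝ) :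
    Measurable fun y => E2 f1 f2 f3 f4 gW gV x y := by
  have h0 : Measurable fun u : (ℝ × ℝ) × ℝ =>
      f1 (x, u.1.1) * f2 (u.1.2, u.1.1) * f3 (u.1.2, u.2) * f4 (x, u.2) * gW x * gV u.1.1 *
        gW u.1.2 * gV u.2 := by fun_prop
  exact h0.lintegral_prod_right'.lintegral_prod_right'

lemma measE3 (hf1 : Measurable f1) (hf2 : Measurable f2) (hf3 : Measurable f3)
    (hf4 : Measurable f4) (hgW : Measurable gW) (hgV : Measurable gV) :
    Measurable fun x => E3 f1 f2 f3 f4 gW gV x := by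
  have h0 : Measurable fun u : ((ℝ × ℝ) × ℝ) × ℝ =>
      f1 (u.1.1.1, u.1.1.2) * f2 (u.1.2, u.1.1.2) * f3 (u.1.2, u.2) * f4 (u.1.1.1, u.2) *
        gW u.1.1.1 * gV u.1.1.2 * gW u.1.2 * gV u.2 := by fun_prop
  exact h0.lintegral_prod_right'.lintegral_prod_right'.lintegral_prod_right'

section bounds

variable {C : ℝ≥0∞} (hgW : Measurable gW) (hgV : Measurable gV)
  (hb1 : ∀ z, f1 z ≤ C) (hb2 : ∀ z, f2 z ≤ C) (hb3 : ∀ z, f3 z ≤ C) (hb4 : ∀ z, f4 z ≤ C)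

include hgV hb1 hb2 hb3 hb4 in
lemma bnd1 (x y x' : ℝ) :
    E1 f1 f2 f3 f4 gW gV x y x' ≤ C * C * C * C * gW x * gV y * gW x' * ∫⁻ s, gV s := by
  apply lint_le_const_mul hgV
  intro y'
  gcongr
  exacts [hb1 _, hb2 _, hb3 _, hb4 _]

include hgW hgV hb1 hb2 hb3 hb4 in
lemma bnd2 (x y : ℝ) :
    E2 f1 f2 f3 f4 gW gV x y ≤
      C * C * C * C * gW x * gV y * (∫⁻ s, gV s) * ∫⁻ s, gW s := by
  apply lint_le_const_mul hgW
  intro x'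
  exact (bnd1 hgV hb1 hb2 hb3 hb4 x y x').trans_eq (by ring)

include hgW hgV hb1 hb2 hb3 hb4 in
lemma bnd3 (x : ℝ) :
    E3 f1 f2 f3 f4 gW gV x ≤
      C * C * C * C * gW x * (∫⁻ s, gV s) * (∫⁻ s, gW s) * ∫⁻ s, gV s := by
  apply lint_le_const_mul hgV
  intro y
  exact (bnd2 hgW hgV hb1 hb2 hb3 hb4 x y).trans_eq (by ring)

include hgW hgV hb1 hb2 hb3 hb4 in
lemma bnd4 :
    E4 f1 f2 f3 f4 gW gV ≤
      C * C * C * C * (∫⁻ s, gV s) * (∫⁻ s, gW s) * (∫⁻ s, gV s) * ∫⁻ s, gW s := by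
  apply lint_le_const_mul hgW
  intro x
  exact (bnd3 hgW hgV hb1 hb2 hb3 hb4 x).trans_eq (by ring)

end bounds

lemma rearr (hf1 : Measurable f1) (hf2 : Measurable f2) (hf3 : Measurable f3)
    (hf4 : Measurable f4) (hgW : Measurable gW) (hgV : Measurable gV) :
    E4 f1 f2 f3 f4 gW gV =
      ∫⁻ x, ∫⁻ x', Lfun f1 f2 gV x x' * Lfun f4 f3 gV x x' * (gW x * gW x') := by
  refine lintegral_congr fun x => ?_
  have hM : Measurable fun x' => Lfun f4 f3 gV x x' := measurable_Lfun_right hf4 hf3 hgV x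
  have stepa : ∀ (y x' : ℝ), E1 f1 f2 f3 f4 gW gV x y x' =
      f1 (x, y) * f2 (x', y) * gV y * (gW x * gW x') * Lfun f4 f3 gV x x' := by
    intro y x'
    unfold E1 Lfun
    rw [show (fun y' => f1 (x, y) * f2 (x', y) * f3 (x', y') * f4 (x, y') * gW x * gV y *
          gW x' * gV y')
        = fun y' => (f1 (x, y) * f2 (x', y) * gV y * (gW x * gW x')) *
            (f4 (x, y') * f3 (x', y') * gV y')
        from funext fun y' => by ring]
    exact lintegral_const_mul _ (by fun_prop)
  have E3eq : E3 f1 f2 f3 f4 gW gV x = ∫⁻ y, ∫⁻ x',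
      f1 (x, y) * f2 (x', y) * gV y * (gW x * gW x') * Lfun f4 f3 gV x x' := by
    unfold E3 E2
    exact lintegral_congr fun y => lintegral_congr fun x' => stepa y x'
  rw [E3eq, lintegral_lintegral_swap]
  · refine lintegral_congr fun x' => ?_
    rw [show (fun y => f1 (x, y) * f2 (x', y) * gV y * (gW x * gW x') * Lfun f4 f3 gV x x')
        = fun y => (gW x * gW x' * Lfun f4 f3 gV x x') * (f1 (x, y) * f2 (x', y) * gV y)
        from funext fun y => by ring,
      lintegral_const_mul _ (by fun_prop)]
    unfold Lfun
    ring
  · apply Measurable.aemeasurable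
    have h1 : Measurable fun w : ℝ × ℝ =>
        f1 (x, w.1) * f2 (w.2, w.1) * gV w.1 * (gW x * gW w.2) := by fun_prop
    exact h1.mul (hM.comp measurable_snd)


lemma main1 (hf1 : Measurable f1) (hf2 : Measurable f2) (hf3 : Measurable f3)
    (hf4 : Measurable f4) (hgW : Measurable gW) (hgV : Measurable gV) :
    E4 f1 f2 f3 f4 gW gV ≤
      (E4 f1 f2 f2 f1 gW gV) ^ (1/2 : ℝ) * (E4 f4 f3 f3 f4 gW gV) ^ (1/2 : ℝ) := by
  have hL : Measurable fun w : ℝ × ℝ => Lfun f1 f2 gV w.1 w.2 := measurable_Lfun hf1 hf2 hgV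
  have hMm : Measurable fun w : ℝ × ℝ => Lfun f4 f3 gV w.1 w.2 := measurable_Lfun hf4 hf3 hgV
  have hG : Measurable fun w : ℝ × ℝ => gW w.1 * gW w.2 := by fun_prop
  rw [rearr hf1 hf2 hf3 hf4 hgW hgV, rearr hf1 hf2 hf2 hf1 hgW hgV,
    rearr hf4 hf3 hf3 hf4 hgW hgV]
  have e1 : (∫⁻ x, ∫⁻ x', Lfun f1 f2 gV x x' * Lfun f4 f3 gV x x' * (gW x * gW x'))
      = ∫⁻ z : ℝ × ℝ, Lfun f1 f2 gV z.1 z.2 * Lfun f4 f3 gV z.1 z.2 * (gW z.1 * gW z.2)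
        ∂(Measure.prod volume volume) :=
    lintegral_lintegral ((hL.mul hMm).mul hG).aemeasurable
  have e2 : (∫⁻ x, ∫⁻ x', Lfun f1 f2 gV x x' * Lfun f1 f2 gV x x' * (gW x * gW x'))
      = ∫⁻ z : ℝ × ℝ, Lfun f1 f2 gV z.1 z.2 * Lfun f1 f2 gV z.1 z.2 * (gW z.1 * gW z.2)
        ∂(Measure.prod volume volume) :=
    lintegral_lintegral ((hL.mul hL).mul hG).aemeasurable
  have e3 : (∫⁻ x, ∫⁻ x', Lfun f4 f3 gV x x' * Lfun f4 f3 gV x x' * (gW x * gW x'))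
      = ∫⁻ z : ℝ × ℝ, Lfun f4 f3 gV z.1 z.2 * Lfun f4 f3 gV z.1 z.2 * (gW z.1 * gW z.2)
        ∂(Measure.prod volume volume) :=
    lintegral_lintegral ((hMm.mul hMm).mul hG).aemeasurable
  rw [e1, e2, e3]
  exact CSweight _ hL.aemeasurable hMm.aemeasurable hG.aemeasurable

lemma main2 (hf : Measurable f) (hgW : Measurable gW) (hgV : Measurable gV) :
    E4 f f f f gW gV ≤
      (∫⁻ x, (∫⁻ y, f (x, y) * f (x, y) * gV y) * gW x) *
        ∫⁻ x, (∫⁻ y, f (x, y) * f (x, y) * gV y) * gW x := by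
  set P : ℝ → ℝ≥0∞ := fun x => ∫⁻ y, f (x, y) * f (x, y) * gV y with hPdef
  have hP : Measurable P := by
    have : Measurable fun u : ℝ × ℝ => f (u.1, u.2) * f (u.1, u.2) * gV u.2 := by fun_prop
    exact this.lintegral_prod_right'
  rw [rearr hf hf hf hf hgW hgV]
  have hpt : ∀ x x', Lfun f f gV x x' ≤ P x ^ (1/2:ℝ) * P x' ^ (1/2:ℝ) := by
    intro x x'
    have hu : AEMeasurable (fun y => f (x, y) * (gV y) ^ (1/2:ℝ)) volume := by
      apply Measurable.aemeasurable; fun_prop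
    have hv : AEMeasurable (fun y => f (x', y) * (gV y) ^ (1/2:ℝ)) volume := by
      apply Measurable.aemeasurable; fun_prop
    have hCS := CSbasic (volume : Measure ℝ) hu hv
    have l1 : Lfun f f gV x x'
        = ∫⁻ y, (f (x, y) * (gV y) ^ (1/2:ℝ)) * (f (x', y) * (gV y) ^ (1/2:ℝ)) :=
      lintegral_congr fun y => by rw [mul_mul_mul_comm, half_half]
    have l2 : (∫⁻ y, (f (x, y) * (gV y) ^ (1/2:ℝ)) * (f (x, y) * (gV y) ^ (1/2:ℝ))) = P x :=
      lintegral_congr fun y => by rw [mul_mul_mul_comm, half_half]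
    have l3 : (∫⁻ y, (f (x', y) * (gV y) ^ (1/2:ℝ)) * (f (x', y) * (gV y) ^ (1/2:ℝ))) = P x' :=
      lintegral_congr fun y => by rw [mul_mul_mul_comm, half_half]
    rw [l1, ← l2, ← l3]
    exact hCS
  calc (∫⁻ x, ∫⁻ x', Lfun f f gV x x' * Lfun f f gV x x' * (gW x * gW x'))
      ≤ ∫⁻ x, ∫⁻ x', (P x * P x') * (gW x * gW x') := by
        refine lintegral_mono fun x => lintegral_mono fun x' => ?_
        have h := hpt x x'
        calc Lfun f f gV x x' * Lfun f f gV x x' * (gW x * gW x')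
            ≤ (P x ^ (1/2:ℝ) * P x' ^ (1/2:ℝ)) * (P x ^ (1/2:ℝ) * P x' ^ (1/2:ℝ)) *
              (gW x * gW x') := by gcongr
          _ = (P x * P x') * (gW x * gW x') := by
              rw [mul_mul_mul_comm (P x ^ (1/2:ℝ)), half_half, half_half]
    _ = (∫⁻ x, P x * gW x) * ∫⁻ x, P x * gW x := by
        have inner : ∀ x, (∫⁻ x', (P x * P x') * (gW x * gW x'))
            = (P x * gW x) * ∫⁻ x', P x' * gW x' := by
          intro x
          rw [show (fun x' => (P x * P x') * (gW x * gW x'))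
              = fun x' => (P x * gW x) * (P x' * gW x') from funext fun x' => by ring,
            lintegral_const_mul _ (f := fun x' => P x' * gW x') (hP.mul hgW)]
        simp only [inner]
        rw [lintegral_mul_const _ (f := fun x' => P x' * gW x') (hP.mul hgW)]


/-- conversion of the real iterated integral to `E4`. -/
lemma conv_eq (F1 F2 F3 F4 : ℝ × ℝ → ℝ) (W V : ℝ → ℝ)
    (m1 : Measurable F1) (m2 : Measurable F2) (m3 : Measurable F3) (m4 : Measurable F4)
    (mW : Measurable W) (mV : Measurable V)
    (n1 : ∀ z, 0 ≤ F1 z) (n2 : ∀ z, 0 ≤ F2 z) (n3 : ∀ z, 0 ≤ F3 z) (n4 : ∀ z, 0 ≤ F4 z)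
    (nW : ∀ x, 0 ≤ W x) (nV : ∀ x, 0 ≤ V x)
    (C : ℝ≥0∞) (hCtop : C ≠ ⊤)
    (hC1 : ∀ z, ENNReal.ofReal (F1 z) ≤ C) (hC2 : ∀ z, ENNReal.ofReal (F2 z) ≤ C)
    (hC3 : ∀ z, ENNReal.ofReal (F3 z) ≤ C) (hC4 : ∀ z, ENNReal.ofReal (F4 z) ≤ C)
    (hIW : (∫⁻ x, ENNReal.ofReal (W x)) ≠ ⊤) (hIV : (∫⁻ x, ENNReal.ofReal (V x)) ≠ ⊤) :
    (∫ x : ℝ, ∫ y : ℝ, ∫ x' : ℝ, ∫ y' : ℝ,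
        F1 (x, y) * F2 (x', y) * F3 (x', y') * F4 (x, y') * W x * V y * W x' * V y')
      = (E4 (fun z => ENNReal.ofReal (F1 z)) (fun z => ENNReal.ofReal (F2 z))
          (fun z => ENNReal.ofReal (F3 z)) (fun z => ENNReal.ofReal (F4 z))
          (fun x => ENNReal.ofReal (W x)) (fun y => ENNReal.ofReal (V y))).toReal := by
  set f1 : ℝ × ℝ → ℝ≥0∞ := fun z => ENNReal.ofReal (F1 z) with hf1d
  set f2 : ℝ × ℝ → ℝ≥0∞ := fun z => ENNReal.ofReal (F2 z) with hf2d
  set f3 : ℝ × ℝ → ℝ≥0∞ := fun z => ENNReal.ofReal (F3 z) with hf3d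
  set f4 : ℝ × ℝ → ℝ≥0∞ := fun z => ENNReal.ofReal (F4 z) with hf4d
  set gW : ℝ → ℝ≥0∞ := fun x => ENNReal.ofReal (W x) with hgWd
  set gV : ℝ → ℝ≥0∞ := fun x => ENNReal.ofReal (V x) with hgVd
  have hf1 : Measurable f1 := m1.ennreal_ofReal
  have hf2 : Measurable f2 := m2.ennreal_ofReal
  have hf3 : Measurable f3 := m3.ennreal_ofReal
  have hf4 : Measurable f4 := m4.ennreal_ofReal
  have hgW : Measurable gW := mW.ennreal_ofReal
  have hgV : Measurable gV := mV.ennreal_ofReal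
  have gWfin : ∀ x, gW x ≠ ⊤ := fun x => ENNReal.ofReal_ne_top
  have gVfin : ∀ x, gV x ≠ ⊤ := fun x => ENNReal.ofReal_ne_top
  have nn8 : ∀ (x y x' y' : ℝ),
      0 ≤ F1 (x, y) * F2 (x', y) * F3 (x', y') * F4 (x, y') * W x * V y * W x' * V y' :=
    fun x y x' y' =>
      mul_nonneg (mul_nonneg (mul_nonneg (mul_nonneg (mul_nonneg (mul_nonneg
        (mul_nonneg (n1 _) (n2 _)) (n3 _)) (n4 _)) (nW _)) (nV _)) (nW _)) (nV _)
  have h8 : ∀ (x y x' y' : ℝ),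
      ENNReal.ofReal (F1 (x, y) * F2 (x', y) * F3 (x', y') * F4 (x, y') * W x * V y * W x' * V y')
        = f1 (x, y) * f2 (x', y) * f3 (x', y') * f4 (x, y') * gW x * gV y * gW x' * gV y' := by
    intro x y x' y'
    rw [ENNReal.ofReal_mul' (nV y'), ENNReal.ofReal_mul' (nW x'), ENNReal.ofReal_mul' (nV y),
      ENNReal.ofReal_mul' (nW x), ENNReal.ofReal_mul' (n4 _), ENNReal.ofReal_mul' (n3 _),
      ENNReal.ofReal_mul' (n2 _)]
  have inner_eq : ∀ (x y x' : ℝ),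
      (∫ y' : ℝ, F1 (x, y) * F2 (x', y) * F3 (x', y') * F4 (x, y') * W x * V y * W x' * V y')
        = (E1 f1 f2 f3 f4 gW gV x y x').toReal := by
    intro x y x'
    rw [integral_eq_lintegral_of_nonneg_ae (Filter.Eventually.of_forall fun y' => nn8 x y x' y')
      (Measurable.aestronglyMeasurable (by fun_prop))]
    unfold E1
    congr 1
    exact lintegral_congr fun y' => h8 x y x' y'
  have fin1 : ∀ (x y x' : ℝ), E1 f1 f2 f3 f4 gW gV x y x' < ⊤ := by
    intro x y x'
    refine lt_of_le_of_lt (bnd1 hgV hC1 hC2 hC3 hC4 x y x') (lt_top_iff_ne_top.2 ?_)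
    exact ENNReal.mul_ne_top (ENNReal.mul_ne_top (ENNReal.mul_ne_top (ENNReal.mul_ne_top
      (ENNReal.mul_ne_top (ENNReal.mul_ne_top (ENNReal.mul_ne_top hCtop hCtop) hCtop) hCtop)
      (gWfin x)) (gVfin y)) (gWfin x')) hIV
  have fin2 : ∀ (x y : ℝ), E2 f1 f2 f3 f4 gW gV x y < ⊤ := by
    intro x y
    refine lt_of_le_of_lt (bnd2 hgW hgV hC1 hC2 hC3 hC4 x y) (lt_top_iff_ne_top.2 ?_)
    exact ENNReal.mul_ne_top (ENNReal.mul_ne_top (ENNReal.mul_ne_top (ENNReal.mul_ne_top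
      (ENNReal.mul_ne_top (ENNReal.mul_ne_top (ENNReal.mul_ne_top hCtop hCtop) hCtop) hCtop)
      (gWfin x)) (gVfin y)) hIV) hIW
  have fin3 : ∀ (x : ℝ), E3 f1 f2 f3 f4 gW gV x < ⊤ := by
    intro x
    refine lt_of_le_of_lt (bnd3 hgW hgV hC1 hC2 hC3 hC4 x) (lt_top_iff_ne_top.2 ?_)
    exact ENNReal.mul_ne_top (ENNReal.mul_ne_top (ENNReal.mul_ne_top (ENNReal.mul_ne_top
      (ENNReal.mul_ne_top (ENNReal.mul_ne_top (ENNReal.mul_ne_top hCtop hCtop) hCtop) hCtop)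
      (gWfin x)) hIV) hIW) hIV
  have lvl2_eq : ∀ (x y : ℝ),
      (∫ x' : ℝ, (E1 f1 f2 f3 f4 gW gV x y x').toReal) = (E2 f1 f2 f3 f4 gW gV x y).toReal :=
    fun x y => integral_toReal (measE1 hf1 hf2 hf3 hf4 hgW hgV x y).aemeasurable
      (Filter.Eventually.of_forall fun x' => fin1 x y x')
  have lvl3_eq : ∀ (x : ℝ),
      (∫ y : ℝ, (E2 f1 f2 f3 f4 gW gV x y).toReal) = (E3 f1 f2 f3 f4 gW gV x).toReal :=
    fun x => integral_toReal (measE2 hf1 hf2 hf3 hf4 hgW hgV x).aemeasurable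
      (Filter.Eventually.of_forall fun y => fin2 x y)
  have lvl4_eq : (∫ x : ℝ, (E3 f1 f2 f3 f4 gW gV x).toReal) = (E4 f1 f2 f3 f4 gW gV).toReal :=
    integral_toReal (measE3 hf1 hf2 hf3 hf4 hgW hgV).aemeasurable
      (Filter.Eventually.of_forall fun x => fin3 x)
  have step : (fun x => ∫ y : ℝ, ∫ x' : ℝ, ∫ y' : ℝ,
      F1 (x, y) * F2 (x', y) * F3 (x', y') * F4 (x, y') * W x * V y * W x' * V y')
      = fun x => (E3 f1 f2 f3 f4 gW gV x).toReal := by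
    funext x
    have s2 : (fun y => ∫ x' : ℝ, ∫ y' : ℝ,
        F1 (x, y) * F2 (x', y) * F3 (x', y') * F4 (x, y') * W x * V y * W x' * V y')
        = fun y => (E2 f1 f2 f3 f4 gW gV x y).toReal := by
      funext y
      have s1 : (fun x' => ∫ y' : ℝ,
          F1 (x, y) * F2 (x', y) * F3 (x', y') * F4 (x, y') * W x * V y * W x' * V y')
          = fun x' => (E1 f1 f2 f3 f4 gW gV x y x').toReal :=
        funext fun x' => inner_eq x y x'
      rw [s1]
      exact lvl2_eq x y
    rw [s2]
    exact lvl3_eq x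
  rw [step]
  exact lvl4_eq


lemma continuous_vth : Continuous vth := by
  have h : ∀ x : ℝ, (1 + |x|)^4 ≠ 0 := fun x => by positivity
  exact ((continuous_const.add continuous_abs).pow 4).inv₀ h

lemma vth_nonneg (x : ℝ) : 0 ≤ vth x := by unfold vth; positivity

lemma integrable_vth : Integrable vth := by
  refine integrable_inv_one_add_sq.mono' continuous_vth.aestronglyMeasurable
    (Filter.Eventually.of_forall fun x => ?_)
  rw [Real.norm_eq_abs, abs_of_nonneg (vth_nonneg x)]
  unfold vth
  have h1 : (1:ℝ) + x^2 ≤ (1 + |x|)^4 := by nlinarith [abs_nonneg x, sq_abs x]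
  exact inv_anti₀ (by positivity) h1

lemma integrable_Wt (p t : ℝ) (ht : 0 < t) :
    Integrable (fun x : ℝ => t⁻¹ * vth ((p - x)/t)) := by
  have h1 : Integrable (fun u : ℝ => vth (u / t)) := integrable_vth.comp_div ht.ne'
  have h2 : Integrable (fun x : ℝ => vth ((p - x) / t)) :=
    (integrable_comp_sub_left (fun u => vth (u / t)) p).mpr h1
  exact h2.const_mul _

lemma rhs_eq (F : ℝ × ℝ → ℝ) (W V : ℝ → ℝ) (mF : Measurable F) (mW : Measurable W)
    (mV : Measurable V) (nF : ∀ z, 0 ≤ F z) (nW : ∀ x, 0 ≤ W x) (nV : ∀ x, 0 ≤ V x) :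
    (∫ z : ℝ × ℝ, (F z)^2 * (W z.1 * V z.2))
      = (∫⁻ x, (∫⁻ y, ENNReal.ofReal (F (x, y)) * ENNReal.ofReal (F (x, y)) *
          ENNReal.ofReal (V y)) * ENNReal.ofReal (W x)).toReal := by
  rw [integral_eq_lintegral_of_nonneg_ae (Filter.Eventually.of_forall fun z =>
      mul_nonneg (sq_nonneg _) (mul_nonneg (nW _) (nV _)))
    (Measurable.aestronglyMeasurable
      ((mF.pow_const 2).mul ((mW.comp measurable_fst).mul (mV.comp measurable_snd))))]
  congr 1
  have hof : ∀ z : ℝ × ℝ, ENNReal.ofReal ((F z)^2 * (W z.1 * V z.2))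
      = (ENNReal.ofReal (F z) * ENNReal.ofReal (F z)) *
        (ENNReal.ofReal (W z.1) * ENNReal.ofReal (V z.2)) := by
    intro z
    rw [ENNReal.ofReal_mul (sq_nonneg _), ENNReal.ofReal_mul (nW _), sq,
      ENNReal.ofReal_mul (nF z)]
  rw [lintegral_congr hof, Measure.volume_eq_prod, lintegral_prod _ (by fun_prop)]
  refine lintegral_congr fun x => ?_
  dsimp only
  rw [show (fun y => (ENNReal.ofReal (F (x, y)) * ENNReal.ofReal (F (x, y))) *
      (ENNReal.ofReal (W x) * ENNReal.ofReal (V y)))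
      = fun y => ENNReal.ofReal (W x) * (ENNReal.ofReal (F (x, y)) *
        ENNReal.ofReal (F (x, y)) * ENNReal.ofReal (V y)) from funext fun y => by ring,
    lintegral_const_mul _ (by fun_prop), mul_comm]

end BoxCS


/-- The box Cauchy–Schwarz inequality and the `L²`-average bound for
`A^{(p,q,t)}(F₁,F₂,F₃,F₄) = F * [ϑ⊗ϑ⊗ϑ⊗ϑ]_t(p,q,p,q)`. -/
theorem box_cauchy_schwarz (F1 F2 F3 F4 : ℝ × ℝ → ℝ)
    (h1 : Nice F1) (h2 : Nice F2) (h3 : Nice F3) (h4 : Nice F4)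
    (p q t : ℝ) (ht : 0 < t) :
    (entConv F1 F2 F3 F4 vth vth vth vth t p q ≤
      Real.sqrt (entConv F1 F2 F2 F1 vth vth vth vth t p q) *
        Real.sqrt (entConv F4 F3 F3 F4 vth vth vth vth t p q)) ∧
    ∀ F : ℝ × ℝ → ℝ, Nice F →
      entConv F F F F vth vth vth vth t p q ≤
        (∫ z : ℝ × ℝ, (F z)^2 * ((t⁻¹ * vth ((p - z.1)/t)) * (t⁻¹ * vth ((q - z.2)/t))))^2 := by
  classical
  obtain ⟨m1, ⟨C1, hC1⟩, -, n1⟩ := h1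
  obtain ⟨m2, ⟨C2, hC2⟩, -, n2⟩ := h2
  obtain ⟨m3, ⟨C3, hC3⟩, -, n3⟩ := h3
  obtain ⟨m4, ⟨C4, hC4⟩, -, n4⟩ := h4
  have mW : Measurable fun x : ℝ => t⁻¹ * vth ((p - x)/t) :=
    measurable_const.mul
      (BoxCS.continuous_vth.measurable.comp ((measurable_const.sub measurable_id).div_const t))
  have mV : Measurable fun y : ℝ => t⁻¹ * vth ((q - y)/t) :=
    measurable_const.mul
      (BoxCS.continuous_vth.measurable.comp ((measurable_const.sub measurable_id).div_const t))
  have nW : ∀ x : ℝ, 0 ≤ t⁻¹ * vth ((p - x)/t) :=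
    fun x => mul_nonneg (inv_nonneg.2 ht.le) (BoxCS.vth_nonneg _)
  have nV : ∀ y : ℝ, 0 ≤ t⁻¹ * vth ((q - y)/t) :=
    fun y => mul_nonneg (inv_nonneg.2 ht.le) (BoxCS.vth_nonneg _)
  have hIW : (∫⁻ x, ENNReal.ofReal (t⁻¹ * vth ((p - x)/t))) ≠ ⊤ :=
    (BoxCS.integrable_Wt p t ht).lintegral_lt_top.ne
  have hIV : (∫⁻ y, ENNReal.ofReal (t⁻¹ * vth ((q - y)/t))) ≠ ⊤ :=
    (BoxCS.integrable_Wt q t ht).lintegral_lt_top.ne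
  set gW : ℝ → ENNReal := fun x => ENNReal.ofReal (t⁻¹ * vth ((p - x)/t)) with hgWd
  set gV : ℝ → ENNReal := fun y => ENNReal.ofReal (t⁻¹ * vth ((q - y)/t)) with hgVd
  have hgW : Measurable gW := mW.ennreal_ofReal
  have hgV : Measurable gV := mV.ennreal_ofReal
  constructor
  · -- part 1
    set C : ENNReal := ENNReal.ofReal (max (max C1 C2) (max C3 C4)) with hCd
    have hCtop : C ≠ ⊤ := ENNReal.ofReal_ne_top
    have b1 : ∀ z, ENNReal.ofReal (F1 z) ≤ C := fun z => ENNReal.ofReal_le_ofReal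
      (((le_abs_self _).trans (hC1 z)).trans ((le_max_left _ _).trans (le_max_left _ _)))
    have b2 : ∀ z, ENNReal.ofReal (F2 z) ≤ C := fun z => ENNReal.ofReal_le_ofReal
      (((le_abs_self _).trans (hC2 z)).trans ((le_max_right _ _).trans (le_max_left _ _)))
    have b3 : ∀ z, ENNReal.ofReal (F3 z) ≤ C := fun z => ENNReal.ofReal_le_ofReal
      (((le_abs_self _).trans (hC3 z)).trans ((le_max_left _ _).trans (le_max_right _ _)))
    have b4 : ∀ z, ENNReal.ofReal (F4 z) ≤ C := fun z => ENNReal.ofReal_le_ofReal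
      (((le_abs_self _).trans (hC4 z)).trans ((le_max_right _ _).trans (le_max_right _ _)))
    set f1 : ℝ × ℝ → ENNReal := fun z => ENNReal.ofReal (F1 z) with hf1d
    set f2 : ℝ × ℝ → ENNReal := fun z => ENNReal.ofReal (F2 z) with hf2d
    set f3 : ℝ × ℝ → ENNReal := fun z => ENNReal.ofReal (F3 z) with hf3d
    set f4 : ℝ × ℝ → ENNReal := fun z => ENNReal.ofReal (F4 z) with hf4d
    have hf1 : Measurable f1 := m1.ennreal_ofReal
    have hf2 : Measurable f2 := m2.ennreal_ofReal
    have hf3 : Measurable f3 := m3.ennreal_ofReal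
    have hf4 : Measurable f4 := m4.ennreal_ofReal
    have eq0 : entConv F1 F2 F3 F4 vth vth vth vth t p q
        = (BoxCS.E4 f1 f2 f3 f4 gW gV).toReal := by
      rw [entConv]
      exact BoxCS.conv_eq F1 F2 F3 F4 _ _ m1 m2 m3 m4 mW mV n1 n2 n3 n4 nW nV C hCtop
        b1 b2 b3 b4 hIW hIV
    have eq1 : entConv F1 F2 F2 F1 vth vth vth vth t p q
        = (BoxCS.E4 f1 f2 f2 f1 gW gV).toReal := by
      rw [entConv]
      exact BoxCS.conv_eq F1 F2 F2 F1 _ _ m1 m2 m2 m1 mW mV n1 n2 n2 n1 nW nV C hCtop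
        b1 b2 b2 b1 hIW hIV
    have eq2 : entConv F4 F3 F3 F4 vth vth vth vth t p q
        = (BoxCS.E4 f4 f3 f3 f4 gW gV).toReal := by
      rw [entConv]
      exact BoxCS.conv_eq F4 F3 F3 F4 _ _ m4 m3 m3 m4 mW mV n4 n3 n3 n4 nW nV C hCtop
        b4 b3 b3 b4 hIW hIV
    have hX : BoxCS.E4 f1 f2 f2 f1 gW gV ≠ ⊤ := by
      refine ne_top_of_le_ne_top ?_ (BoxCS.bnd4 hgW hgV b1 b2 b2 b1)
      exact ENNReal.mul_ne_top (ENNReal.mul_ne_top (ENNReal.mul_ne_top (ENNReal.mul_ne_top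
        (ENNReal.mul_ne_top (ENNReal.mul_ne_top (ENNReal.mul_ne_top hCtop hCtop) hCtop) hCtop)
        hIV) hIW) hIV) hIW
    have hY : BoxCS.E4 f4 f3 f3 f4 gW gV ≠ ⊤ := by
      refine ne_top_of_le_ne_top ?_ (BoxCS.bnd4 hgW hgV b4 b3 b3 b4)
      exact ENNReal.mul_ne_top (ENNReal.mul_ne_top (ENNReal.mul_ne_top (ENNReal.mul_ne_top
        (ENNReal.mul_ne_top (ENNReal.mul_ne_top (ENNReal.mul_ne_top hCtop hCtop) hCtop) hCtop)
        hIV) hIW) hIV) hIW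
    have hmain := BoxCS.main1 hf1 hf2 hf3 hf4 hgW hgV
    rw [eq0, eq1, eq2, Real.sqrt_eq_rpow, Real.sqrt_eq_rpow, ENNReal.toReal_rpow,
      ENNReal.toReal_rpow, ← ENNReal.toReal_mul]
    exact ENNReal.toReal_mono
      (ENNReal.mul_ne_top (ENNReal.rpow_ne_top_of_nonneg (by norm_num) hX)
        (ENNReal.rpow_ne_top_of_nonneg (by norm_num) hY)) hmain
  · -- part 2
    intro F hF
    obtain ⟨mF, ⟨CF, hCF⟩, -, nF⟩ := hF
    set C : ENNReal := ENNReal.ofReal CF with hCd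
    have hCtop : C ≠ ⊤ := ENNReal.ofReal_ne_top
    have bF : ∀ z, ENNReal.ofReal (F z) ≤ C := fun z =>
      ENNReal.ofReal_le_ofReal ((le_abs_self _).trans (hCF z))
    set f : ℝ × ℝ → ENNReal := fun z => ENNReal.ofReal (F z) with hfd
    have hf : Measurable f := mF.ennreal_ofReal
    have eqF : entConv F F F F vth vth vth vth t p q = (BoxCS.E4 f f f f gW gV).toReal := by
      rw [entConv]
      exact BoxCS.conv_eq F F F F _ _ mF mF mF mF mW mV nF nF nF nF nW nV C hCtop
        bF bF bF bF hIW hIV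
    have eqR : (∫ z : ℝ × ℝ, (F z)^2 *
          ((t⁻¹ * vth ((p - z.1)/t)) * (t⁻¹ * vth ((q - z.2)/t))))
        = (∫⁻ x, (∫⁻ y, f (x, y) * f (x, y) * gV y) * gW x).toReal :=
      BoxCS.rhs_eq F _ _ mF mW mV nF nW nV
    set S : ENNReal := ∫⁻ x, (∫⁻ y, f (x, y) * f (x, y) * gV y) * gW x with hSd
    have hPle : ∀ x, (∫⁻ y, f (x, y) * f (x, y) * gV y) ≤ C * C * ∫⁻ s, gV s := fun x =>
      BoxCS.lint_le_const_mul hgV fun y => by gcongr <;> exact bF _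
    have hS : S ≠ ⊤ := by
      exact ne_top_of_le_ne_top
        (ENNReal.mul_ne_top (ENNReal.mul_ne_top (ENNReal.mul_ne_top hCtop hCtop) hIV) hIW)
        (BoxCS.lint_le_const_mul hgW fun x => mul_le_mul_left (hPle x) _)
    have hmain := BoxCS.main2 hf hgW hgV
    rw [eqF, eqR]
    calc (BoxCS.E4 f f f f gW gV).toReal ≤ (S * S).toReal :=
        ENNReal.toReal_mono (ENNReal.mul_ne_top hS hS) hmain
      _ = S.toReal * S.toReal := ENNReal.toReal_mul
      _ = S.toReal ^ 2 := (sq _).symm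


end
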